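/- Let Cat(m) = C(2m,m)/(m+1), a(q) = (q/(q+1))·C(2q,q), and c(q) = (3q/(q+2))·C(2q,q). Let h : ℕ → ℚ satisfy h(0) = 0 and, for every q ≥ 0, h(q+1) = c(q+1) + a(q+2) + 2·Σ_{k=0}^{q} a(k)·c(q−k) + 2·Σ_{k=0}^{q} Cat(q−k)·h(k). Then for every q ≥ 0, h(q) = 3q·C(2q,q). -/

import Mathlib

open Finset

private lemma choose_eq_cat (m : ℕ) :
    (Nat.choose (2 * m) m : ℚ) = ((m : ℚ) + 1) * (catalan m : ℚ) := by
  have h := succ_mul_catalan_eq_centralBinom m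
  have h2 : m.centralBinom = Nat.choose (2 * m) m := rfl
  rw [← h2, ← h]
  push_cast
  ring

private lemma catR (m : ℕ) :
    ((m : ℚ) + 2) * (catalan (m + 1) : ℚ) = 2 * (2 * (m : ℚ) + 1) * (catalan m : ℚ) := by
  have h := Nat.succ_mul_centralBinom_succ m
  have hc : (Nat.centralBinom (m + 1) : ℚ) = ((m : ℚ) + 2) * (catalan (m + 1) : ℚ) := by
    have := choose_eq_cat (m + 1)
    have h2 : (m + 1).centralBinom = Nat.choose (2 * (m + 1)) (m + 1) := rfl
    rw [h2, this]; push_cast; ring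
  have hc0 : (Nat.centralBinom m : ℚ) = ((m : ℚ) + 1) * (catalan m : ℚ) := by
    have := choose_eq_cat m
    have h2 : m.centralBinom = Nat.choose (2 * m) m := rfl
    rw [h2, this]
  have hq : ((m : ℚ) + 1) * (((m : ℚ) + 2) * (catalan (m + 1) : ℚ)) =
      ((m : ℚ) + 1) * (2 * (2 * (m : ℚ) + 1) * (catalan m : ℚ)) := by
    have hcast := congrArg (fun n : ℕ => (n : ℚ)) h
    push_cast at hcast
    rw [hc, hc0] at hcast
    linear_combination hcast
  exact mul_left_cancel₀ (by positivity) hq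

private lemma a_closed (k : ℕ) :
    ((k : ℚ) / ((k : ℚ) + 1)) * (Nat.choose (2 * k) k : ℚ) = (k : ℚ) * (catalan k : ℚ) := by
  rw [choose_eq_cat]
  have hk : ((k : ℚ) + 1) ≠ 0 := by positivity
  field_simp

private lemma c_closed (m : ℕ) :
    3 * (m : ℚ) / ((m : ℚ) + 2) * (Nat.choose (2 * m) m : ℚ) =
      (3 * (m : ℚ) + 1) * (catalan m : ℚ) - (catalan (m + 1) : ℚ) := by
  have h2 : ((m : ℚ) + 2) ≠ 0 := by positivity
  rw [choose_eq_cat, div_mul_eq_mul_div, div_eq_iff h2]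
  linear_combination catR m

private lemma cat_closed (m : ℕ) :
    (Nat.choose (2 * m) m : ℚ) / ((m : ℚ) + 1) = (catalan m : ℚ) := by
  rw [choose_eq_cat]
  have hk : ((m : ℚ) + 1) ≠ 0 := by positivity
  field_simp

private lemma catconv (q : ℕ) :
    (catalan (q + 1) : ℚ) = ∑ k ∈ range (q + 1), (catalan k : ℚ) * (catalan (q - k) : ℚ) := by
  have hn : catalan (q + 1) = ∑ k ∈ range (q + 1), catalan k * catalan (q - k) := by
    rw [catalan_succ]
    exact Fin.sum_univ_eq_sum_range (fun k => catalan k * catalan (q - k)) (q + 1)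
  rw [hn]
  push_cast
  rfl

private lemma P1_lemma (q : ℕ) :
    2 * ∑ k ∈ range (q + 1), (k : ℚ) * (catalan k : ℚ) * (catalan (q - k) : ℚ) =
      (q : ℚ) * (catalan (q + 1) : ℚ) := by
  have hrefl := Finset.sum_range_reflect
    (fun k => (k : ℚ) * (catalan k : ℚ) * (catalan (q - k) : ℚ)) (q + 1)
  simp only [Nat.add_sub_cancel] at hrefl
  have key : 2 * ∑ k ∈ range (q + 1), (k : ℚ) * (catalan k : ℚ) * (catalan (q - k) : ℚ) =
      ∑ k ∈ range (q + 1),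
        ((k : ℚ) * (catalan k : ℚ) * (catalan (q - k) : ℚ) +
          ((q - k : ℕ) : ℚ) * (catalan (q - k) : ℚ) * (catalan (q - (q - k)) : ℚ)) := by
    rw [Finset.sum_add_distrib, hrefl]
    ring
  rw [key]
  have step : ∀ k ∈ range (q + 1),
      ((k : ℚ) * (catalan k : ℚ) * (catalan (q - k) : ℚ) +
        ((q - k : ℕ) : ℚ) * (catalan (q - k) : ℚ) * (catalan (q - (q - k)) : ℚ)) =
      (q : ℚ) * ((catalan k : ℚ) * (catalan (q - k) : ℚ)) := by
    intro k hk
    have hk' : k ≤ q := Nat.lt_succ_iff.mp (mem_range.mp hk)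
    rw [Nat.sub_sub_self hk', Nat.cast_sub hk']
    ring
  rw [Finset.sum_congr rfl step, ← Finset.mul_sum, ← catconv]

theorem third_order_g1g2_coefficient (h : ℕ → ℚ)
    (h0 : h 0 = 0)
    (hrec : ∀ q : ℕ, h (q + 1) =
      (3 * ((q + 1 : ℕ) : ℚ) / ((q + 1 : ℕ) + 2)) * (Nat.choose (2 * (q + 1)) (q + 1) : ℚ) +
      (((q + 2 : ℕ) : ℚ) / ((q + 2 : ℕ) + 1)) * (Nat.choose (2 * (q + 2)) (q + 2) : ℚ) +
      2 * (∑ k ∈ Finset.range (q + 1),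
        (((k : ℚ) / (k + 1)) * (Nat.choose (2 * k) k : ℚ)) *
        ((3 * ((q - k : ℕ) : ℚ) / ((q - k : ℕ) + 2)) * (Nat.choose (2 * (q - k)) (q - k) : ℚ))) +
      2 * ∑ k ∈ Finset.range (q + 1),
        ((Nat.choose (2 * (q - k)) (q - k) : ℚ) / ((q - k : ℕ) + 1)) * h k) :
    ∀ q : ℕ, h q = 3 * (q : ℚ) * (Nat.choose (2 * q) q : ℚ) := by
  intro q
  induction q using Nat.strong_induction_on with
  | _ q ih =>
    match q with
    | 0 => simpa using h0
    | Nat.succ q =>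
      rw [hrec q]
      -- rewrite the first sum
      have hS1 : (∑ k ∈ Finset.range (q + 1),
            (((k : ℚ) / (k + 1)) * (Nat.choose (2 * k) k : ℚ)) *
            ((3 * ((q - k : ℕ) : ℚ) / ((q - k : ℕ) + 2)) *
              (Nat.choose (2 * (q - k)) (q - k) : ℚ))) =
          ∑ k ∈ range (q + 1),
            ((k : ℚ) * (catalan k : ℚ)) *
              ((3 * ((q : ℚ) - (k : ℚ)) + 1) * (catalan (q - k) : ℚ) -
                (catalan (q + 1 - k) : ℚ)) := by
        refine Finset.sum_congr rfl fun k hk => ?_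
        have hk' : k ≤ q := Nat.lt_succ_iff.mp (mem_range.mp hk)
        rw [a_closed k, c_closed (q - k)]
        rw [show q - k + 1 = q + 1 - k by omega, Nat.cast_sub hk']
      -- rewrite the second sum using the induction hypothesis
      have hS2 : (∑ k ∈ Finset.range (q + 1),
            ((Nat.choose (2 * (q - k)) (q - k) : ℚ) / ((q - k : ℕ) + 1)) * h k) =
          ∑ k ∈ range (q + 1),
            (catalan (q - k) : ℚ) * (3 * (k : ℚ) * ((k : ℚ) + 1) * (catalan k : ℚ)) := by
        refine Finset.sum_congr rfl fun k hk => ?_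
        have hk' : k < q + 1 := mem_range.mp hk
        rw [ih k hk', cat_closed (q - k), choose_eq_cat k]
        ring
      rw [hS1, hS2]
      have KEY : (∑ k ∈ range (q + 1),
            ((k : ℚ) * (catalan k : ℚ)) *
              ((3 * ((q : ℚ) - (k : ℚ)) + 1) * (catalan (q - k) : ℚ) -
                (catalan (q + 1 - k) : ℚ))) +
          (∑ k ∈ range (q + 1),
            (catalan (q - k) : ℚ) * (3 * (k : ℚ) * ((k : ℚ) + 1) * (catalan k : ℚ))) =
          (3 * (q : ℚ) + 4) *
              (∑ k ∈ range (q + 1), (k : ℚ) * (catalan k : ℚ) * (catalan (q - k) : ℚ)) -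
            (∑ k ∈ range (q + 1), (k : ℚ) * (catalan k : ℚ) * (catalan (q + 1 - k) : ℚ)) := by
        rw [← Finset.sum_add_distrib]
        have step : ∀ k ∈ range (q + 1),
            (((k : ℚ) * (catalan k : ℚ)) *
              ((3 * ((q : ℚ) - (k : ℚ)) + 1) * (catalan (q - k) : ℚ) -
                (catalan (q + 1 - k) : ℚ)) +
              ((catalan (q - k) : ℚ)) * (3 * (k : ℚ) * ((k : ℚ) + 1) * (catalan k : ℚ))) =
            ((3 * (q : ℚ) + 4) * ((k : ℚ) * (catalan k : ℚ) * (catalan (q - k) : ℚ)) -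
              (k : ℚ) * (catalan k : ℚ) * (catalan (q + 1 - k) : ℚ)) := by
          intro k hk
          ring
        rw [Finset.sum_congr rfl step, Finset.sum_sub_distrib, ← Finset.mul_sum]
      have hP1 := P1_lemma q
      have hR : 2 * (∑ k ∈ range (q + 1),
            (k : ℚ) * (catalan k : ℚ) * (catalan (q + 1 - k) : ℚ)) =
          ((q : ℚ) + 1) * (catalan (q + 2) : ℚ) -
            2 * ((q : ℚ) + 1) * (catalan (q + 1) : ℚ) := by
        have h1 := P1_lemma (q + 1)
        rw [Finset.sum_range_succ] at h1
        simp only [Nat.sub_self, catalan_zero, Nat.cast_one, mul_one] at h1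
        push_cast at h1 ⊢
        linear_combination h1
      have E0 := choose_eq_cat (q + 1)
      have E1 := c_closed (q + 1)
      have E2 := a_closed (q + 2)
      push_cast at E0 E1 E2 hP1 hR KEY ⊢
      linear_combination E1 + E2 + 2 * KEY + (3 * (q : ℚ) + 4) * hP1 - hR -
        3 * ((q : ℚ) + 1) * E0
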